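/- arXiv:0810.5431 — 2 statements merged into one kernel-verified Lean document; each statement's English description precedes it below -/
import Mathlib

section
/- Let μ_⋆ be a probability measure on a measurable space 𝒳, let W : 𝒳 → [1,∞) be measurable with ∫ W dμ_⋆ = ∞, and let h : [1,∞) → (0,∞) be decreasing with ∫_1^∞ h(s) ds < ∞. Then there exists a sequence w_n increasing to infinity such that μ_⋆({x : W(x) ≥ w_n}) ≥ 2 h(w_n) for every n. -/
open MeasureTheory

/-- if `W ≥ 1` has infinite integral with respect to a probability
measure `μ` and `h` is a positive decreasing integrable function on `[1,∞)`,
then there is a sequence `w n` increasing to infinity along which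
`μ(W ≥ w n) ≥ 2 h(w n)`. -/
theorem exists_tail_sequence {X : Type*} [MeasurableSpace X]
    (μ : Measure X) [IsProbabilityMeasure μ]
    (W : X → ℝ) (hWmeas : Measurable W) (hW1 : ∀ x, 1 ≤ W x)
    (hWnotint : ¬ Integrable W μ)
    (h : ℝ → ℝ) (hpos : ∀ s, 1 ≤ s → 0 < h s)
    (hdec : ∀ s t, 1 ≤ s → s ≤ t → h t ≤ h s)
    (hint : IntegrableOn h (Set.Ici 1)) :
    ∃ w : ℕ → ℝ, Monotone w ∧ Filter.Tendsto w Filter.atTop Filter.atTop ∧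
      ∀ n, 2 * h (w n) ≤ (μ {x | w n ≤ W x}).toReal := by
  have claim : ∀ M : ℝ, ∃ v : ℝ, M ≤ v ∧ 2 * h v ≤ (μ {x | v ≤ W x}).toReal := by
    by_contra hc
    push_neg at hc
    obtain ⟨M₀, hM⟩ := hc
    set M := max M₀ 1 with hMdef
    have hM1 : (1:ℝ) ≤ M := le_max_right _ _
    have hM0 : (0:ℝ) < M := lt_of_lt_of_le one_pos hM1
    have hbound : ∀ v, M ≤ v → (μ {x | v ≤ W x}).toReal < 2 * h v := fun v hv =>
      hM v (le_trans (le_max_left _ _) hv)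
    apply hWnotint
    have hWnn : 0 ≤ᵐ[μ] W := Filter.Eventually.of_forall fun x => le_trans zero_le_one (hW1 x)
    refine ⟨hWmeas.aestronglyMeasurable, ?_⟩
    rw [hasFiniteIntegral_iff_ofReal hWnn]
    rw [lintegral_eq_lintegral_meas_lt μ hWnn hWmeas.aemeasurable]
    have hsplit : Set.Ioi (0:ℝ) = Set.Ioc 0 M ∪ Set.Ioi M := (Set.Ioc_union_Ioi_eq_Ioi hM0.le).symm
    rw [hsplit, lintegral_union measurableSet_Ioi Set.Ioc_disjoint_Ioi_same]
    have h1 : ∫⁻ t in Set.Ioc (0:ℝ) M, μ {a | t < W a} ≤ ENNReal.ofReal M := by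
      calc ∫⁻ t in Set.Ioc (0:ℝ) M, μ {a | t < W a}
          ≤ ∫⁻ _ in Set.Ioc (0:ℝ) M, 1 := lintegral_mono fun t => prob_le_one
        _ = ENNReal.ofReal M := by
            rw [setLIntegral_one, Real.volume_Ioc, sub_zero]
    have hint2 : IntegrableOn (fun t => 2 * h t) (Set.Ioi M) := by
      exact ((hint.mono_set fun t ht => le_trans hM1 (le_of_lt ht)).const_mul 2)
    have h2 : ∫⁻ t in Set.Ioi M, μ {a | t < W a} ≤ ENNReal.ofReal (∫ t in Set.Ioi M, 2 * h t) := by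
      rw [ofReal_integral_eq_lintegral_ofReal hint2 ((ae_restrict_iff' measurableSet_Ioi).2
        (Filter.Eventually.of_forall fun t ht =>
          le_of_lt (mul_pos two_pos (hpos t (le_trans hM1 (le_of_lt ht))))))]
      refine lintegral_mono_ae ((ae_restrict_iff' measurableSet_Ioi).2
        (Filter.Eventually.of_forall fun t ht => ?_))
      have hle : μ {a | t < W a} ≤ μ {x | t ≤ W x} := measure_mono fun a ha => Set.mem_setOf.2 (le_of_lt (Set.mem_setOf.1 ha))
      have hfin : μ {x | t ≤ W x} ≠ ⊤ := measure_ne_top μ _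
      calc μ {a | t < W a} ≤ μ {x | t ≤ W x} := hle
        _ = ENNReal.ofReal ((μ {x | t ≤ W x}).toReal) := (ENNReal.ofReal_toReal hfin).symm
        _ ≤ ENNReal.ofReal (2 * h t) := ENNReal.ofReal_le_ofReal
            (le_of_lt (hbound t (le_of_lt ht)))
    exact lt_of_le_of_lt (add_le_add h1 h2) (by finiteness)
  choose g hg1 hg2 using claim
  refine ⟨fun n => Nat.rec (g 0) (fun k prev => g (max prev ((k:ℝ)+1))) n, ?_, ?_, ?_⟩
  · refine monotone_nat_of_le_succ fun k => ?_
    exact le_trans (le_max_left _ _) (hg1 _)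
  · refine Filter.tendsto_atTop_mono (fun n => ?_) tendsto_natCast_atTop_atTop
    induction n with
    | zero => exact le_trans (by norm_num) (hg1 0)
    | succ k ih =>
      push_cast
      exact le_trans (le_max_right _ _) (hg1 _)
  · intro n
    cases n with
    | zero => exact hg2 0
    | succ k => exact hg2 _
end

section
/- Let A be the 3×3 real matrix A = [[0, 1/2, −1/2], [−2α, −γ, 0], [2α, 0, 0]] with α, γ > 0. Then det A = −γα, and every eigenvalue of A has strictly negative real part. -/
open Matrix

/-- the matrix `A = [[0, 1/2, -1/2], [-2α, -γ, 0], [2α, 0, 0]]`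
with `α, γ > 0` has determinant `-γα` and all its (complex) eigenvalues have
strictly negative real part. -/
theorem matrix_A_hurwitz (α γ : ℝ) (hα : 0 < α) (hγ : 0 < γ) :
    (Matrix.det !![(0:ℝ), 1/2, -1/2; -2*α, -γ, 0; 2*α, 0, 0] = -γ * α) ∧
    ∀ lam : ℂ,
      lam ∈ spectrum ℂ
        ((!![(0:ℝ), 1/2, -1/2; -2*α, -γ, 0; 2*α, 0, 0]).map (Complex.ofReal)) →
      lam.re < 0 := by
  constructor
  · simp [Matrix.det_fin_three, Matrix.vecHead, Matrix.vecTail]; ring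
  · intro lam hlam
    have h := spectrum.mem_iff.mp hlam
    rw [Matrix.isUnit_iff_isUnit_det] at h
    have hdet : Matrix.det (algebraMap ℂ (Matrix (Fin 3) (Fin 3) ℂ) lam -
        (!![(0:ℝ), 1/2, -1/2; -2*α, -γ, 0; 2*α, 0, 0]).map (Complex.ofReal)) = 0 := by
      by_contra h'; exact h (isUnit_iff_ne_zero.mpr h')
    have hpoly : lam*lam*lam + (γ:ℂ)*lam*lam + 2*(α:ℂ)*lam + (γ:ℂ)*(α:ℂ) = 0 := by
      rw [← hdet]
      simp [Matrix.det_fin_three, Matrix.algebraMap_eq_diagonal, Matrix.sub_apply,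
        Matrix.diagonal_apply, Matrix.map_apply, Matrix.vecHead, Matrix.vecTail]
      ring
    set x := lam.re with hx
    set y := lam.im with hy
    have h1 : x*x*x - 3*x*(y*y) + γ*(x*x) - γ*(y*y) + 2*α*x + γ*α = 0 := by
      have := congrArg Complex.re hpoly
      simp [Complex.mul_re, Complex.mul_im, Complex.add_re, Complex.ofReal_re,
        Complex.ofReal_im] at this
      linarith [this]
    have h2 : y * (3*(x*x) - y*y + 2*γ*x + 2*α) = 0 := by
      have := congrArg Complex.im hpoly
      simp [Complex.mul_re, Complex.mul_im, Complex.add_im, Complex.ofReal_re,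
        Complex.ofReal_im] at this
      nlinarith [this]
    by_contra hcon
    push_neg at hcon
    rcases mul_eq_zero.mp h2 with hy0 | hf
    · rw [hy0] at h1
      nlinarith [mul_nonneg (mul_nonneg hcon hcon) hcon, mul_nonneg hγ.le (mul_nonneg hcon hcon),
        mul_nonneg hα.le hcon, mul_pos hγ hα]
    · have hff : y*y = 3*(x*x) + 2*γ*x + 2*α := by linarith
      nlinarith [h1, hff, mul_nonneg (mul_nonneg hcon hcon) hcon,
        mul_nonneg hγ.le (mul_nonneg hcon hcon), mul_nonneg hα.le hcon,
        mul_nonneg (mul_nonneg hγ.le hγ.le) hcon, mul_pos hγ hα]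
end
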